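/- arXiv:math/0410373 — 2 statements merged into one kernel-verified Lean document; each statement's English description precedes it below -/
import Mathlib

section
/- A connected hypergraph on n vertices with edge magnitude exactly n - 1 is a hypertree (has no cycles). -/
/-- A hypergraph on vertex set `V`: a family of edges (allowing repeated edges,
indexed by a finite type `E`), each edge being a subset of `V` with at least two vertices. -/
structure HGraph (V : Type) [Fintype V] [DecidableEq V] where
  E : Type
  fintypeE : Fintype E
  edge : E → Finset V
  two_le : ∀ e, 2 ≤ (edge e).card

attribute [instance] HGraph.fintypeE

namespace HGraph

variable {V : Type} [Fintype V] [DecidableEq V]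

/-- A walk `v₀, e₁, v₁, …, eₘ, vₘ` in a hypergraph: consecutive vertices both lie
in the intervening edge. -/
structure Walk (H : HGraph V) (m : ℕ) where
  vert : Fin (m + 1) → V
  edg : Fin m → H.E
  mem_left : ∀ i : Fin m, vert i.castSucc ∈ H.edge (edg i)
  mem_right : ∀ i : Fin m, vert i.succ ∈ H.edge (edg i)

/-- A path: a walk with all vertices distinct and all edges distinct. -/
def Walk.IsPath {H : HGraph V} {m : ℕ} (w : H.Walk m) : Prop :=
  Function.Injective w.vert ∧ Function.Injective w.edg

/-- A cycle: a walk with at least two edges, all edges distinct, and all vertices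
distinct except that the first and last coincide. -/
def Walk.IsCycle {H : HGraph V} {m : ℕ} (w : H.Walk m) : Prop :=
  2 ≤ m ∧ Function.Injective w.edg ∧ w.vert 0 = w.vert (Fin.last m) ∧
    ∀ i j : Fin (m + 1), w.vert i = w.vert j →
      i = j ∨ (i = 0 ∧ j = Fin.last m) ∨ (i = Fin.last m ∧ j = 0)

/-- A hypergraph is connected if every pair of vertices is joined by a path. -/
def Connected (H : HGraph V) : Prop :=
  ∀ u v : V, ∃ (m : ℕ) (w : H.Walk m),
    w.IsPath ∧ w.vert 0 = u ∧ w.vert (Fin.last m) = v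

/-- A hypertree is a connected hypergraph with no cycles. -/
def IsHypertree (H : HGraph V) : Prop :=
  H.Connected ∧ ∀ (m : ℕ) (w : H.Walk m), ¬ w.IsCycle

/-- The edge magnitude: the sum over all edges `e` of `|e| - 1`. -/
noncomputable def magnitude (H : HGraph V) : ℕ :=
  ∑ e : H.E, ((H.edge e).card - 1)

end HGraph

open SimpleGraph

set_option linter.unusedSectionVars false

section Graph
variable {W : Type} [Fintype W]

lemma connected_delete (G : SimpleGraph W) {x y : W} (hG : G.Connected)
    (hreach : (G \ fromEdgeSet {s(x,y)}).Reachable x y) :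
    (G \ fromEdgeSet {s(x,y)}).Connected := by
  haveI := hG.nonempty
  refine Connected.mk ?_
  intro a b
  obtain ⟨p⟩ := hG.preconnected a b
  induction p with
  | nil => exact Reachable.refl _
  | @cons a c b h q ih =>
    refine Reachable.trans ?_ ih
    by_cases he : s(a, c) = s(x, y)
    · rw [Sym2.eq_iff] at he
      rcases he with ⟨rfl, rfl⟩ | ⟨rfl, rfl⟩
      · exact hreach
      · exact hreach.symm
    · refine Adj.reachable ?_
      rw [sdiff_adj, fromEdgeSet_adj]
      exact ⟨h, fun hc => he hc.1⟩

lemma ncard_delete (G : SimpleGraph W) {e : Sym2 W} (he : e ∈ G.edgeSet) :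
    Nat.card (G \ fromEdgeSet {e}).edgeSet = Nat.card G.edgeSet - 1 := by
  have hset : (G \ fromEdgeSet {e}).edgeSet = G.edgeSet \ {e} := by
    simp [edgeSet_sdiff, edgeSet_fromEdgeSet, edgeSet_sdiff_sdiff_isDiag]
  rw [hset, Nat.card_coe_set_eq, Nat.card_coe_set_eq,
    Set.ncard_diff_singleton_of_mem he]

lemma card_le_ncard_edges : ∀ (N : ℕ) (G : SimpleGraph W), Nat.card G.edgeSet = N →
    G.Connected → Fintype.card W ≤ N + 1 := by
  intro N
  induction N using Nat.strong_induction_on with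
  | _ N ih =>
  intro G hN hG
  by_cases hac : G.IsAcyclic
  · classical
    letI : Fintype G.edgeSet := Fintype.ofFinite _
    have h1 := SimpleGraph.IsTree.card_edgeFinset ⟨hG, hac⟩
    have h2 : G.edgeFinset.card = Nat.card G.edgeSet := by
      rw [Nat.card_eq_fintype_card]
      convert SimpleGraph.edgeFinset_card (G := G)
    omega
  · rw [SimpleGraph.IsAcyclic] at hac
    push_neg at hac
    obtain ⟨v, c, hc⟩ := hac
    have hne : c.edges ≠ [] := by
      cases c with
      | nil => exact absurd rfl hc.ne_nil
      | cons h q => simp [Walk.edges_cons]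
    obtain ⟨e, he⟩ := List.exists_mem_of_ne_nil _ hne
    induction e using Sym2.ind with
    | _ x y =>
    obtain ⟨hadj, hreach⟩ := adj_and_reachable_delete_edges_iff_exists_cycle.mpr ⟨v, c, hc, he⟩
    have hGmem : s(x,y) ∈ G.edgeSet := hadj
    have hG' := connected_delete G hG hreach
    have hcard := ncard_delete G hGmem
    have hpos : 0 < Nat.card G.edgeSet := by
      haveI : Nonempty G.edgeSet := ⟨⟨_, hGmem⟩⟩
      exact Nat.card_pos
    have := ih (N - 1) (by omega) _ (by rw [hcard, hN]) hG'
    omega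

/-- non-bridge edge in a connected graph forces edge count ≥ vertex count -/
lemma card_le_of_nonbridge (G : SimpleGraph W) {x y : W} (hG : G.Connected)
    (hxy : G.Adj x y) (hreach : (G \ fromEdgeSet {s(x,y)}).Reachable x y) :
    Fintype.card W ≤ Nat.card G.edgeSet := by
  have hG' := connected_delete G hG hreach
  have hcard := ncard_delete G (G.mem_edgeSet.mpr hxy)
  have hpos : 0 < Nat.card G.edgeSet := by
    haveI : Nonempty G.edgeSet := ⟨⟨_, G.mem_edgeSet.mpr hxy⟩⟩
    exact Nat.card_pos
  have := card_le_ncard_edges _ _ hcard hG'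
  omega

lemma interleave_reachable (G : SimpleGraph W) :
    ∀ (m : ℕ) (a : Fin (m+1) → W) (b : Fin m → W),
    (∀ i : Fin m, G.Adj (a i.castSucc) (b i)) → (∀ i : Fin m, G.Adj (b i) (a i.succ)) →
    G.Reachable (a 0) (a (Fin.last m)) := by
  intro m
  induction m with
  | zero => intro a b _ _; exact Reachable.refl _
  | succ k ih =>
    intro a b h1 h2
    have r1 : G.Reachable (a 0) (a 1) := by
      have ha := h1 0
      have hb := h2 0
      rw [Fin.castSucc_zero] at ha
      exact (ha.reachable).trans hb.reachable
    have r2 := ih (fun i => a i.succ) (fun i => b i.succ)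
      (fun i => by
        have := h1 i.succ
        rwa [← Fin.succ_castSucc] at this)
      (fun i => h2 i.succ)
    have r2' : G.Reachable (a 1) (a (Fin.last (k+1))) := by
      simpa [Fin.succ_last] using r2
    exact r1.trans r2'
end Graph

namespace HGraph
variable {V : Type} [Fintype V] [DecidableEq V]

/-- The bipartite incidence graph of a hypergraph. -/
def inc (H : HGraph V) : SimpleGraph (V ⊕ H.E) where
  Adj x y := ∃ v e, v ∈ H.edge e ∧
    ((x = Sum.inl v ∧ y = Sum.inr e) ∨ (x = Sum.inr e ∧ y = Sum.inl v))
  symm := ⟨by rintro x y ⟨v, e, hv, (⟨rfl, rfl⟩ | ⟨rfl, rfl⟩)⟩ <;> exact ⟨v, e, hv, by tauto⟩⟩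
  loopless := ⟨by rintro x ⟨v, e, hv, (⟨rfl, h⟩ | ⟨rfl, h⟩)⟩ <;> simp at h⟩

lemma inc_adj_inl_inr {H : HGraph V} {v : V} {e : H.E} :
    (inc H).Adj (Sum.inl v) (Sum.inr e) ↔ v ∈ H.edge e := by
  constructor
  · rintro ⟨v', e', hv', (⟨h1, h2⟩ | ⟨h1, h2⟩)⟩
    · cases h1; cases h2; exact hv'
    · exact absurd h1 (by simp)
  · intro h; exact ⟨v, e, h, Or.inl ⟨rfl, rfl⟩⟩

/-- a hypergraph walk gives graph reachability (in any subgraph containing its darts) -/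
lemma inc_reachable {H : HGraph V} {m : ℕ} (w : H.Walk m) :
    (inc H).Reachable (Sum.inl (w.vert 0)) (Sum.inl (w.vert (Fin.last m))) := by
  exact interleave_reachable (inc H) m (fun i => Sum.inl (w.vert i)) (fun i => Sum.inr (w.edg i))
    (fun i => inc_adj_inl_inr.mpr (w.mem_left i))
    (fun i => ((inc_adj_inl_inr.mpr (w.mem_right i)).symm))

lemma inc_connected (H : HGraph V) (hH : H.Connected) [Nonempty V] :
    (inc H).Connected := by
  have key : ∀ u v : V, (inc H).Reachable (Sum.inl u) (Sum.inl v) := by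
    intro u v
    obtain ⟨m, w, _, h0, hl⟩ := hH u v
    have := inc_reachable w
    rwa [h0, hl] at this
  have key2 : ∀ x : V ⊕ H.E, ∃ u : V, (inc H).Reachable x (Sum.inl u) := by
    rintro (u | e)
    · exact ⟨u, Reachable.refl _⟩
    · have hne : (H.edge e).Nonempty :=
        Finset.card_pos.mp (lt_of_lt_of_le (by norm_num) (H.two_le e))
      obtain ⟨v, hv⟩ := hne
      exact ⟨v, ((inc_adj_inl_inr.mpr hv).symm).reachable⟩
  refine Connected.mk ?_
  intro x y
  obtain ⟨u, hu⟩ := key2 x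
  obtain ⟨v', hv⟩ := key2 y
  exact (hu.trans (key u v')).trans hv.symm

lemma inc_ncard_edgeSet (H : HGraph V) :
    Nat.card (inc H).edgeSet = ∑ e : H.E, (H.edge e).card := by
  classical
  have hb : Function.Bijective
      (fun p : Σ e : H.E, {v // v ∈ H.edge e} =>
        (⟨s(Sum.inl p.2.1, Sum.inr p.1),
          (inc H).mem_edgeSet.mpr (inc_adj_inl_inr.mpr p.2.2)⟩ : (inc H).edgeSet)) := by
    constructor
    · rintro ⟨e, v, hv⟩ ⟨e', v', hv'⟩ h
      rw [Subtype.ext_iff] at h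
      simp only [Sym2.eq_iff] at h
      rcases h with ⟨h1, h2⟩ | ⟨h1, h2⟩
      · cases h1; cases h2; rfl
      · exact absurd h1 (by simp)
    · rintro ⟨z, hz⟩
      induction z using Sym2.ind with
      | _ x y =>
      rw [SimpleGraph.mem_edgeSet] at hz
      obtain ⟨v, e, hv, (⟨rfl, rfl⟩ | ⟨rfl, rfl⟩)⟩ := hz
      · exact ⟨⟨e, v, hv⟩, rfl⟩
      · exact ⟨⟨e, v, hv⟩, Subtype.ext (Sym2.eq_swap)⟩
  rw [← Nat.card_eq_of_bijective _ hb, Nat.card_eq_fintype_card, Fintype.card_sigma]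
  simp [Fintype.card_coe]

end HGraph

/-- A connected hypergraph on `n` vertices with edge magnitude exactly `n - 1`
is a hypertree (it has no cycles). -/
theorem connected_magnitude_eq_implies_hypertree
    {V : Type} [Fintype V] [DecidableEq V] (H : HGraph V)
    (n : ℕ) (hn : Fintype.card V = n) (hH : H.Connected)
    (hmag : H.magnitude = n - 1) :
    H.IsHypertree := by
  refine ⟨hH, ?_⟩
  intro m w hc
  obtain ⟨hm, hinj, hclose, hvert⟩ := hc
  haveI : Nonempty V := ⟨w.vert 0⟩
  set B := HGraph.inc H with hB
  have hBconn : B.Connected := HGraph.inc_connected H hH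
  set e₀ : H.E := w.edg ⟨0, by omega⟩ with he₀
  set x : V ⊕ H.E := Sum.inl (w.vert ⟨1, by omega⟩) with hx
  set y : V ⊕ H.E := Sum.inr e₀ with hy
  have hv1 : w.vert ⟨1, by omega⟩ ∈ H.edge e₀ := w.mem_right ⟨0, by omega⟩
  have hadj : B.Adj x y := HGraph.inc_adj_inl_inr.mpr hv1
  -- the long way round, avoiding the edge s(x,y)
  set B' := B \ fromEdgeSet {s(x, y)} with hB'
  have hxne : ∀ (u : V) (f : H.E), u ≠ w.vert ⟨1, by omega⟩ ∨ f ≠ e₀ →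
      s(Sum.inl u, (Sum.inr f : V ⊕ H.E)) ≠ s(x, y) := by
    intro u f hne heq
    rw [hx, hy, Sym2.eq_iff] at heq
    rcases heq with ⟨h1, h2⟩ | ⟨h1, h2⟩
    · rcases hne with h | h
      · exact h (Sum.inl.inj h1)
      · exact h (Sum.inr.inj h2)
    · simp at h1
  have hB'adj : ∀ (u : V) (f : H.E), u ∈ H.edge f →
      (u ≠ w.vert ⟨1, by omega⟩ ∨ f ≠ e₀) → B'.Adj (Sum.inl u) (Sum.inr f) := by
    intro u f hu hne
    rw [hB', sdiff_adj, fromEdgeSet_adj]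
    exact ⟨HGraph.inc_adj_inl_inr.mpr hu, fun hco => hxne u f hne hco.1⟩
  have hedgne : ∀ (i : Fin (m - 1)), w.edg ⟨i.val + 1, by omega⟩ ≠ e₀ := by
    intro i hco
    rw [he₀] at hco
    have := congrArg Fin.val (hinj hco)
    simp at this
  have hR1 : B'.Reachable
      (Sum.inl (w.vert ⟨1, by omega⟩)) (Sum.inl (w.vert (Fin.last m))) := by
    have key := interleave_reachable B' (m - 1)
      (fun i => Sum.inl (w.vert ⟨i.val + 1, by omega⟩))
      (fun i => Sum.inr (w.edg ⟨i.val + 1, by omega⟩))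
      (fun i => hB'adj _ _ (w.mem_left ⟨i.val + 1, by omega⟩) (Or.inr (hedgne i)))
      (fun i => (hB'adj _ _ (w.mem_right ⟨i.val + 1, by omega⟩) (Or.inr (hedgne i))).symm)
    have e1 : (⟨1, by omega⟩ : Fin (m+1)) = ⟨(0 : Fin (m - 1 + 1)).val + 1, by omega⟩ :=
      Fin.ext (by simp)
    have e2 : (Fin.last m) = ⟨(Fin.last (m - 1)).val + 1, by omega⟩ := by
      refine Fin.ext ?_
      simp [Fin.last]
      omega
    rw [e1, e2]
    exact key
  have hR2 : B'.Adj (Sum.inl (w.vert (Fin.last m))) y := by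
    have hmem : w.vert (Fin.last m) ∈ H.edge e₀ := by
      rw [← hclose]
      exact w.mem_left ⟨0, by omega⟩
    refine hB'adj _ _ hmem (Or.inl ?_)
    intro hco
    rcases hvert _ _ hco with h | ⟨h, h'⟩ | ⟨h, h'⟩
    · have := congrArg Fin.val h; simp [Fin.last] at this; omega
    · have := congrArg Fin.val h; simp [Fin.last] at this; omega
    · have := congrArg Fin.val h'; simp at this
  have hreach : B'.Reachable x y := hR1.trans hR2.reachable
  have hle := card_le_of_nonbridge B hBconn hadj hreach
  have hcnt := HGraph.inc_ncard_edgeSet H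
  have hsum : ∑ e : H.E, (H.edge e).card = H.magnitude + Fintype.card H.E := by
    rw [HGraph.magnitude]
    calc ∑ e : H.E, (H.edge e).card
        = ∑ e : H.E, (((H.edge e).card - 1) + 1) :=
          Finset.sum_congr rfl (fun e _ => by have := H.two_le e; omega)
      _ = (∑ e : H.E, ((H.edge e).card - 1)) + Fintype.card H.E := by
          rw [Finset.sum_add_distrib, Finset.sum_const, smul_eq_mul, mul_one, Finset.card_univ]
  have hcardsum : Fintype.card (V ⊕ H.E) = n + Fintype.card H.E := by
    rw [Fintype.card_sum, hn]
  have hn1 : 1 ≤ n := hn ▸ Fintype.card_pos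
  rw [hcardsum, hcnt, hsum, hmag] at hle
  omega
end

section
/- Let R̄(t, u) be the formal power series satisfying R̄ = t·exp(u·(e^{R̄} - 1)). Then [t^n/n!] R̄ = ∑_{k=1}^{n-1} (n u)^k S(n-1, k), where S denotes Stirling numbers of the second kind. -/
open PowerSeries Finset

/-- For a power series `f` with zero constant term, `expComp f = exp(f)`. -/
noncomputable def expComp {K : Type*} [CommRing K] [Algebra ℚ K]
    (f : PowerSeries K) : PowerSeries K :=
  PowerSeries.mk fun n =>
    ∑ k ∈ Finset.range (n + 1),
      algebraMap ℚ K ((k.factorial : ℚ)⁻¹) * PowerSeries.coeff (R := K) n (f ^ k)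

/-- The Stirling numbers of the second kind `S(n, k)`. -/
def stirling : ℕ → ℕ → ℕ
  | 0, 0 => 1
  | 0, _ + 1 => 0
  | _ + 1, 0 => 0
  | n + 1, k + 1 => (k + 1) * stirling n (k + 1) + stirling n k

noncomputable abbrev KK := Polynomial ℚ

namespace Laginv

noncomputable def comp (f g : PowerSeries KK) : PowerSeries KK :=
  PowerSeries.mk fun n => ∑ k ∈ range (n + 1), coeff k f * coeff n (g ^ k)

lemma coeff_comp (f g : PowerSeries KK) (n : ℕ) :
    coeff n (comp f g) = ∑ k ∈ range (n + 1), coeff k f * coeff n (g ^ k) := by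
  simp [comp]

lemma coeff_pow_eq_zero {g : PowerSeries KK} (hg : constantCoeff g = 0)
    {k n : ℕ} (h : n < k) : coeff n (g ^ k) = 0 := by
  have : (X : PowerSeries KK) ^ k ∣ g ^ k := pow_dvd_pow_of_dvd (X_dvd_iff.2 hg) k
  exact (X_pow_dvd_iff.1 this) n h

lemma coeff_comp' (f g : PowerSeries KK) (hg : constantCoeff g = 0) {n N : ℕ}
    (hN : n < N) :
    coeff n (comp f g) = ∑ k ∈ range N, coeff k f * coeff n (g ^ k) := by
  rw [coeff_comp]
  apply Finset.sum_subset (by intro x hx; simp at hx ⊢; omega)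
  intro k _ hk
  simp only [mem_range, not_lt] at hk
  rw [coeff_pow_eq_zero hg (by omega), mul_zero]

lemma comp_add (f₁ f₂ g : PowerSeries KK) :
    comp (f₁ + f₂) g = comp f₁ g + comp f₂ g := by
  ext n : 1
  simp [coeff_comp, add_mul, Finset.sum_add_distrib]

lemma comp_one (g : PowerSeries KK) : comp 1 g = 1 := by
  ext n : 1
  rw [coeff_comp]
  rcases Nat.eq_zero_or_pos n with h | h
  · subst h; simp
  · rw [Finset.sum_eq_single 0]
    · rw [coeff_one, if_pos rfl, pow_zero, coeff_one, if_neg (by omega), one_mul]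
    · intro k _ hk
      rw [coeff_one, if_neg hk, zero_mul]
    · simp

lemma comp_C (a : KK) (g : PowerSeries KK) : comp (C a) g = C a := by
  ext n : 1
  rw [coeff_comp]
  rcases Nat.eq_zero_or_pos n with h | h
  · subst h; simp
  · rw [Finset.sum_eq_single 0]
    · rw [coeff_C, if_pos rfl, pow_zero, coeff_one, if_neg (by omega), mul_zero,
        coeff_C, if_neg (by omega)]
    · intro k _ hk
      rw [coeff_C, if_neg hk, zero_mul]
    · simp

lemma comp_mul (f₁ f₂ g : PowerSeries KK) (hg : constantCoeff g = 0) :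
    comp (f₁ * f₂) g = comp f₁ g * comp f₂ g := by
  ext n : 1
  rw [coeff_comp, PowerSeries.coeff_mul]
  -- RHS: sum over antidiagonal of products of comps
  have rhs : ∑ p ∈ Finset.HasAntidiagonal.antidiagonal n, coeff p.1 (comp f₁ g) * coeff p.2 (comp f₂ g)
      = ∑ k ∈ range (n+1), ∑ l ∈ range (n+1), coeff k f₁ * coeff l f₂ *
          coeff n (g ^ (k + l)) := by
    have : ∀ p ∈ Finset.HasAntidiagonal.antidiagonal n,
        coeff p.1 (comp f₁ g) * coeff p.2 (comp f₂ g)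
        = ∑ k ∈ range (n+1), ∑ l ∈ range (n+1),
            (coeff k f₁ * coeff p.1 (g ^ k)) * (coeff l f₂ * coeff p.2 (g ^ l)) := by
      intro p hp
      have hp' := Finset.HasAntidiagonal.mem_antidiagonal.1 hp
      rw [coeff_comp' f₁ g hg (show p.1 < n+1 by omega),
          coeff_comp' f₂ g hg (show p.2 < n+1 by omega), Finset.sum_mul_sum]
    rw [Finset.sum_congr rfl this, Finset.sum_comm]
    apply Finset.sum_congr rfl
    intro k _
    rw [Finset.sum_comm]
    apply Finset.sum_congr rfl
    intro l _
    have : ∀ p : ℕ × ℕ, coeff k f₁ * coeff p.1 (g ^ k) * (coeff l f₂ * coeff p.2 (g ^ l))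
        = coeff k f₁ * coeff l f₂ * (coeff p.1 (g ^ k) * coeff p.2 (g ^ l)) := by
      intro p; ring
    simp_rw [this]
    rw [← Finset.mul_sum, pow_add, PowerSeries.coeff_mul]
  rw [rhs]
  -- LHS: expand product coefficient of f₁*f₂ and reindex
  have lhs : ∀ m ∈ range (n+1), coeff m (f₁ * f₂) * coeff n (g ^ m)
      = ∑ p ∈ Finset.HasAntidiagonal.antidiagonal m, coeff p.1 f₁ * coeff p.2 f₂ * coeff n (g ^ m) := by
    intro m _
    rw [PowerSeries.coeff_mul, Finset.sum_mul]
  rw [Finset.sum_congr rfl lhs]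
  -- now both are sums over pairs (k,l); terms with k+l > n vanish on RHS
  have step1 : ∀ m ∈ range (n+1), (∑ p ∈ Finset.HasAntidiagonal.antidiagonal m,
      coeff p.1 f₁ * coeff p.2 f₂ * coeff n (g ^ m))
      = ∑ p ∈ Finset.HasAntidiagonal.antidiagonal m,
          coeff p.1 f₁ * coeff p.2 f₂ * coeff n (g ^ (p.1 + p.2)) := by
    intro m _
    apply Finset.sum_congr rfl
    intro p hp
    rw [Finset.HasAntidiagonal.mem_antidiagonal.1 hp]
  rw [Finset.sum_congr rfl step1, Finset.sum_sigma']
  have step2 : ∑ k ∈ range (n+1), ∑ l ∈ range (n+1),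
      coeff k f₁ * coeff l f₂ * coeff n (g ^ (k + l))
      = ∑ p ∈ (range (n+1) ×ˢ range (n+1)).filter (fun p => p.1 + p.2 ≤ n),
          coeff p.1 f₁ * coeff p.2 f₂ * coeff n (g ^ (p.1 + p.2)) := by
    rw [← Finset.sum_product']
    symm
    apply Finset.sum_subset (Finset.filter_subset _ _)
    intro p hp' hp
    have : n < p.1 + p.2 := by
      by_contra h
      exact hp (Finset.mem_filter.2 ⟨hp', by omega⟩)
    rw [coeff_pow_eq_zero hg this, mul_zero]
  rw [step2]
  apply Finset.sum_nbij' (i := fun σ => σ.2) (j := fun p => ⟨p.1 + p.2, p⟩)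
  · intro σ hσ
    simp only [Finset.mem_sigma, mem_range, Finset.HasAntidiagonal.mem_antidiagonal] at hσ
    simp only [Finset.mem_filter, Finset.mem_product, mem_range]
    omega
  · intro p hp
    simp only [Finset.mem_filter, Finset.mem_product, mem_range] at hp
    simp only [Finset.mem_sigma, mem_range, Finset.HasAntidiagonal.mem_antidiagonal]
    exact ⟨by omega, trivial⟩
  · intro σ hσ
    simp only [Finset.mem_sigma, mem_range, Finset.HasAntidiagonal.mem_antidiagonal] at hσ
    simp [hσ.2]
  · intro p _; rfl
  · intro σ hσ; rfl

lemma comp_pow (f g : PowerSeries KK) (hg : constantCoeff g = 0) (k : ℕ) :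
    comp (f ^ k) g = comp f g ^ k := by
  induction k with
  | zero => simpa using comp_one g
  | succ k ih => rw [pow_succ, comp_mul _ _ _ hg, ih, pow_succ]

lemma comp_sub (f₁ f₂ g : PowerSeries KK) :
    comp (f₁ - f₂) g = comp f₁ g - comp f₂ g := by
  have := comp_add (f₁ - f₂) f₂ g
  rw [sub_add_cancel] at this
  rw [this]; ring

lemma constantCoeff_comp (f g : PowerSeries KK) (hg : constantCoeff g = 0) :
    constantCoeff (comp f g) = constantCoeff f := by
  have h := coeff_comp f g 0
  rw [coeff_zero_eq_constantCoeff] at h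
  rw [h]
  simp

local notation "D" => PowerSeries.derivativeFun

lemma coeff_D (f : PowerSeries KK) (n : ℕ) : coeff n (D f) = coeff (n + 1) f * (n + 1) :=
  coeff_derivative f n

lemma D_C (a : KK) : D (C a) = 0 := derivative_C

lemma D_zero : D (0 : PowerSeries KK) = 0 := by
  ext n : 1
  rw [coeff_D]
  simp

lemma D_sum (s : Finset ℕ) (F : ℕ → PowerSeries KK) :
    D (∑ k ∈ s, F k) = ∑ k ∈ s, D (F k) := by
  induction s using Finset.cons_induction with
  | empty => simp [D_zero]
  | cons a s ha ih => rw [Finset.sum_cons, Finset.sum_cons, derivativeFun_add, ih]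

lemma D_pow (g : PowerSeries KK) (k : ℕ) :
    D (g ^ (k+1)) = ((k+1 : ℕ) : PowerSeries KK) * g ^ k * D g := by
  induction k with
  | zero => simp [pow_one]
  | succ k ih =>
    have : g ^ (k+2) = g ^ (k+1) * g := by ring
    rw [this, derivativeFun_mul, ih, smul_eq_mul, smul_eq_mul]
    push_cast
    ring

lemma deriv_comp (f g : PowerSeries KK) (hg : constantCoeff g = 0) :
    D (comp f g) = comp (D f) g * D g := by
  ext n : 1
  -- Q : the "comp (f') g" truncated expansion
  set Q : PowerSeries KK := ∑ k ∈ range (n+1), C (coeff (k+1) f * (k+1)) * g ^ k with hQdef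
  have hQcoeff : ∀ i, coeff i Q =
      ∑ k ∈ range (n+1), coeff (k+1) f * (k+1) * coeff i (g ^ k) := by
    intro i
    rw [hQdef, map_sum]
    apply Finset.sum_congr rfl
    intro k _
    rw [coeff_C_mul]
  have hQ : ∀ i, i ≤ n → coeff i (comp (D f) g) = coeff i Q := by
    intro i hi
    rw [coeff_comp' (D f) g hg (show i < n+1 by omega), hQcoeff]
    apply Finset.sum_congr rfl
    intro k _
    rw [coeff_D]
  set P : PowerSeries KK := ∑ k ∈ range (n+2), C (coeff k f) * g ^ k with hPdef
  have hP : coeff (n+1) (comp f g) = coeff (n+1) P := by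
    rw [coeff_comp' f g hg (show n+1 < n+2 by omega), hPdef, map_sum]
    apply Finset.sum_congr rfl
    intro k _
    rw [coeff_C_mul]
  have hdP : D P = Q * D g := by
    have hsum : D P = ∑ k ∈ range (n+2), D (C (coeff k f) * g ^ k) := by
      rw [hPdef, D_sum]
    rw [hsum, Finset.sum_range_succ']
    have h0 : D (C (coeff 0 f) * g ^ 0) = 0 := by
      rw [pow_zero, mul_one, D_C]
    rw [h0, add_zero, hQdef, Finset.sum_mul]
    apply Finset.sum_congr rfl
    intro k _
    rw [derivativeFun_mul, D_C, smul_zero, add_zero, smul_eq_mul, D_pow, map_mul]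
    have hc : C ((k : KK) + 1) = ((k : PowerSeries KK) + 1) := by
      rw [map_add, map_one, map_natCast]
    push_cast
    rw [hc]
    ring
  rw [coeff_D, hP, ← coeff_D, hdP, PowerSeries.coeff_mul,
    PowerSeries.coeff_mul]
  apply Finset.sum_congr rfl
  intro p hp
  have := Finset.HasAntidiagonal.mem_antidiagonal.1 hp
  rw [hQ p.1 (by omega)]

lemma comp_assoc (f g h : PowerSeries KK) (hg : constantCoeff g = 0)
    (hh : constantCoeff h = 0) :
    comp (comp f g) h = comp f (comp g h) := by
  have hgh : constantCoeff (comp g h) = 0 := by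
    rw [constantCoeff_comp g h hh, hg]
  ext n : 1
  rw [coeff_comp, coeff_comp]
  have L : ∀ k ∈ range (n+1), coeff k (comp f g) * coeff n (h ^ k)
      = ∑ m ∈ range (n+1), coeff m f * coeff k (g ^ m) * coeff n (h ^ k) := by
    intro k hk
    rw [coeff_comp' f g hg (show k < n+1 from mem_range.1 hk), Finset.sum_mul]
  have R : ∀ m ∈ range (n+1), coeff m f * coeff n ((comp g h) ^ m)
      = ∑ k ∈ range (n+1), coeff m f * (coeff k (g ^ m) * coeff n (h ^ k)) := by
    intro m hm
    rw [← comp_pow g h hh m, coeff_comp, Finset.mul_sum]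
  rw [Finset.sum_congr rfl L, Finset.sum_congr rfl R, Finset.sum_comm]
  apply Finset.sum_congr rfl
  intro m _
  apply Finset.sum_congr rfl
  intro k _
  ring

lemma coeff_exp' (n : ℕ) :
    coeff n (PowerSeries.exp KK) = algebraMap ℚ KK ((n.factorial : ℚ)⁻¹) := by
  rw [PowerSeries.coeff_exp, one_div]

lemma D_exp : D (PowerSeries.exp KK) = PowerSeries.exp KK := by
  ext n : 1
  rw [coeff_D, coeff_exp', coeff_exp']
  have h1 : ((n : KK) + 1) = algebraMap ℚ KK ((n : ℚ) + 1) := by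
    rw [map_add, map_natCast, map_one]
  rw [h1, ← map_mul]
  congr 1
  rw [Nat.factorial_succ]
  have h2 : ((n : ℚ) + 1) ≠ 0 := by positivity
  have h3 : ((n.factorial : ℚ)) ≠ 0 := Nat.cast_ne_zero.2 n.factorial_ne_zero
  field_simp
  push_cast
  ring

lemma ode_unique (a y z : PowerSeries KK) (hy : D y = a * y) (hz : D z = a * z)
    (h0 : constantCoeff y = constantCoeff z) : y = z := by
  apply PowerSeries.ext
  intro n
  induction n using Nat.strong_induction_on with
  | _ n ih =>
    cases n with
    | zero =>
      rw [PowerSeries.coeff_zero_eq_constantCoeff_apply, PowerSeries.coeff_zero_eq_constantCoeff_apply]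
      exact h0
    | succ n =>
      have hcy : coeff n (D y) = coeff n (D z) := by
        rw [hy, hz, PowerSeries.coeff_mul, PowerSeries.coeff_mul]
        apply Finset.sum_congr rfl
        intro p hp
        have hp' := Finset.HasAntidiagonal.mem_antidiagonal.1 hp
        rw [ih p.2 (by omega)]
      rw [coeff_D, coeff_D] at hcy
      have hne : ((n : KK) + 1) ≠ 0 := by
        have : ((n : KK) + 1) = ((n + 1 : ℕ) : KK) := by push_cast; ring
        rw [this]
        exact Nat.cast_ne_zero.2 (Nat.succ_ne_zero n)
      exact mul_right_cancel₀ hne hcy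

lemma constantCoeff_expc (f : PowerSeries KK) (hf : constantCoeff f = 0) :
    constantCoeff (comp (PowerSeries.exp KK) f) = 1 := by
  rw [constantCoeff_comp _ _ hf]
  have := coeff_exp' 0
  rw [coeff_zero_eq_constantCoeff] at this
  rw [this]
  simp

lemma D_expc (f : PowerSeries KK) (hf : constantCoeff f = 0) :
    D (comp (PowerSeries.exp KK) f) = comp (PowerSeries.exp KK) f * D f := by
  rw [deriv_comp _ _ hf, D_exp]

lemma expc_add (f g : PowerSeries KK) (hf : constantCoeff f = 0)
    (hg : constantCoeff g = 0) :
    comp (PowerSeries.exp KK) (f + g)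
      = comp (PowerSeries.exp KK) f * comp (PowerSeries.exp KK) g := by
  have hfg : constantCoeff (f + g) = 0 := by rw [map_add, hf, hg, add_zero]
  apply ode_unique (D f + D g)
  · rw [D_expc _ hfg, derivativeFun_add]
    ring
  · rw [derivativeFun_mul, smul_eq_mul, smul_eq_mul, D_expc _ hf, D_expc _ hg]
    ring
  · rw [constantCoeff_expc _ hfg, map_mul, constantCoeff_expc _ hf, constantCoeff_expc _ hg,
      one_mul]

lemma expComp_eq (f : PowerSeries KK) : expComp f = comp (PowerSeries.exp KK) f := by
  apply PowerSeries.ext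
  intro n
  rw [expComp, coeff_mk, coeff_comp]
  apply Finset.sum_congr rfl
  intro k _
  rw [coeff_exp']

lemma lagrange (φ Rr : PowerSeries KK) (hφ : constantCoeff φ = 1)
    (hR0 : constantCoeff Rr = 0) (hfe : Rr = X * comp φ Rr) :
    ∀ m : ℕ, ∀ j : ℕ, 1 ≤ j → j ≤ m →
      (m : KK) * coeff m (Rr ^ j) = (j : KK) * coeff (m - j) (φ ^ m) := by
  intro m
  induction m using Nat.strong_induction_on with
  | _ m ih =>
    intro j hj1 hjm
    have hE0 : constantCoeff (comp φ Rr) = 1 := by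
      rw [constantCoeff_comp _ _ hR0, hφ]
    have hRpow : ∀ i : ℕ, Rr ^ i = X ^ i * comp (φ ^ i) Rr := by
      intro i
      rw [comp_pow _ _ hR0]
      conv_lhs => rw [hfe]
      rw [mul_pow]
    rcases eq_or_lt_of_le hjm with rfl | hlt
    · -- j = m
      rw [Nat.sub_self]
      have h1 : coeff j (Rr ^ j) = coeff 0 (comp (φ ^ j) Rr) := by
        have hx := PowerSeries.coeff_X_pow_mul (comp (φ ^ j) Rr) j 0
        rw [zero_add] at hx
        rw [hRpow j, hx]
      have h2 : coeff 0 (comp (φ ^ j) Rr) = 1 := by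
        rw [PowerSeries.coeff_zero_eq_constantCoeff_apply, constantCoeff_comp _ _ hR0,
          map_pow, hφ, one_pow]
      have h3 : coeff 0 (φ ^ j) = 1 := by
        rw [PowerSeries.coeff_zero_eq_constantCoeff_apply, map_pow, hφ, one_pow]
      rw [h1, h2, h3]
    · -- 1 ≤ j < m
      obtain ⟨p, rfl⟩ : ∃ p, m = j + p + 1 := ⟨m - j - 1, by omega⟩
      obtain ⟨jj, rfl⟩ : ∃ jj, j = jj + 1 := ⟨j - 1, by omega⟩
      set m := jj + 1 + p + 1 with hm
      set j := jj + 1 with hj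
      have hsub : m - j = p + 1 := by omega
      rw [hsub]
      -- Step 1
      have step1 : coeff m (Rr ^ j) =
          ∑ a ∈ range (p + 2), coeff a (φ ^ j) * coeff (p + 1) (Rr ^ a) := by
        rw [hRpow j, show m = (p + 1) + j by omega, PowerSeries.coeff_X_pow_mul,
          coeff_comp]
      -- Step 2
      have step2 : ((p + 1 : ℕ) : KK) * coeff m (Rr ^ j) =
          ∑ a ∈ range (p + 2),
            coeff a (φ ^ j) * ((a : KK) * coeff (p + 1 - a) (φ ^ (p + 1))) := by
        rw [step1, Finset.mul_sum]
        apply Finset.sum_congr rfl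
        intro a ha
        have ha' : a < p + 2 := mem_range.1 ha
        rcases Nat.eq_zero_or_pos a with rfl | hap
        · simp [PowerSeries.coeff_one]
        · have hih := ih (p + 1) (by omega) a hap (by omega)
          calc (((p+1:ℕ)):KK) * (coeff a (φ ^ j) * coeff (p+1) (Rr ^ a))
              = coeff a (φ ^ j) * ((((p+1:ℕ)):KK) * coeff (p+1) (Rr ^ a)) := by ring
            _ = coeff a (φ ^ j) * ((a:KK) * coeff (p+1-a) (φ ^ (p+1))) := by rw [hih]
      -- Step 3 : rewrite as coefficient of D(φ^j) * φ^(p+1)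
      have step3 : ∑ a ∈ range (p + 2),
            coeff a (φ ^ j) * ((a : KK) * coeff (p + 1 - a) (φ ^ (p + 1)))
          = coeff p (D (φ ^ j) * φ ^ (p + 1)) := by
        rw [PowerSeries.coeff_mul, Finset.Nat.sum_antidiagonal_eq_sum_range_succ_mk,
          Finset.sum_range_succ']
        norm_num
        apply Finset.sum_congr rfl
        intro i hi
        rw [coeff_D]
        have : p + 1 - (i + 1) = p - i := by omega
        rw [this]
        push_cast
        ring
      -- Step 4 : key series identity
      have hkey : ((m : ℕ) : PowerSeries KK) * (D (φ ^ j) * φ ^ (p + 1))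
          = ((j : ℕ) : PowerSeries KK) * D (φ ^ m) := by
        have d1 : D (φ ^ j) = ((j : ℕ) : PowerSeries KK) * φ ^ jj * D φ := D_pow φ jj
        have d2 : D (φ ^ m) = ((m : ℕ) : PowerSeries KK) * φ ^ (jj + 1 + p) * D φ := by
          have := D_pow φ (jj + 1 + p)
          rw [show jj + 1 + p + 1 = m from rfl] at this
          exact this
        rw [d1, d2]
        have : φ ^ (jj + 1 + p) = φ ^ jj * φ ^ (p + 1) := by
          rw [← pow_add]
          congr 1
          omega
        rw [this]
        ring
      -- combine
      have comb : (m : KK) * (((p + 1 : ℕ) : KK) * coeff m (Rr ^ j))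
          = (j : KK) * (coeff (p + 1) (φ ^ m) * ((p + 1 : ℕ) : KK)) := by
        have hmC : ((m : ℕ) : PowerSeries KK) = C ((m : ℕ) : KK) := (map_natCast _ _).symm
        have hjC : ((j : ℕ) : PowerSeries KK) = C ((j : ℕ) : KK) := (map_natCast _ _).symm
        have hco := congrArg (coeff p) hkey
        rw [hmC, hjC, coeff_C_mul, coeff_C_mul, coeff_D] at hco
        rw [step2, step3, hco]
        push_cast
        ring
      have hne : ((p + 1 : ℕ) : KK) ≠ 0 := Nat.cast_ne_zero.2 (Nat.succ_ne_zero p)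
      apply mul_right_cancel₀ hne
      calc (m : KK) * coeff m (Rr ^ j) * ((p+1 : ℕ) : KK)
          = (m : KK) * (((p + 1 : ℕ) : KK) * coeff m (Rr ^ j)) := by ring
        _ = (j : KK) * (coeff (p + 1) (φ ^ m) * ((p + 1 : ℕ) : KK)) := comb
        _ = (j : KK) * coeff (p + 1) (φ ^ m) * ((p+1 : ℕ) : KK) := by ring

lemma stirling_succ_zero (n : ℕ) : stirling (n + 1) 0 = 0 := by
  rfl

lemma stirling_eq_zero_of_lt : ∀ n k : ℕ, n < k → stirling n k = 0 := by
  intro n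
  induction n with
  | zero => intro k hk; match k, hk with
    | k + 1, _ => rfl
  | succ n ih =>
    intro k hk
    match k, hk with
    | k + 1, hk =>
      show (k + 1) * stirling n (k + 1) + stirling n k = 0
      rw [ih (k+1) (by omega), ih k (by omega), mul_zero, add_zero]

lemma stirling_binom : ∀ m k : ℕ,
    ∑ j ∈ range (m + 1), Nat.choose m j * stirling j k = stirling (m + 1) (k + 1) := by
  intro m
  induction m with
  | zero =>
    intro k
    show Nat.choose 0 0 * stirling 0 k = stirling 1 (k + 1)
    show 1 * stirling 0 k = (k + 1) * stirling 0 (k + 1) + stirling 0 k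
    rw [stirling_eq_zero_of_lt 0 (k+1) (by omega), mul_zero, zero_add, one_mul]
  | succ m ih =>
    intro k
    rw [Finset.sum_range_succ']
    have hsplit : ∀ i ∈ range (m + 1), Nat.choose (m+1) (i+1) * stirling (i+1) k
        = Nat.choose m i * stirling (i+1) k + Nat.choose m (i+1) * stirling (i+1) k := by
      intro i _
      rw [Nat.choose_succ_succ, add_mul]
    rw [Finset.sum_congr rfl hsplit, Finset.sum_add_distrib, add_assoc]
    have hsecond : (∑ i ∈ range (m+1), Nat.choose m (i+1) * stirling (i+1) k)
        + Nat.choose (m+1) 0 * stirling 0 k = stirling (m + 1) (k + 1) := by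
      have h2 : (∑ i ∈ range (m+1), Nat.choose m (i+1) * stirling (i+1) k)
          + Nat.choose (m+1) 0 * stirling 0 k
          = ∑ j ∈ range (m+2), Nat.choose m j * stirling j k := by
        rw [Finset.sum_range_succ' (fun j => Nat.choose m j * stirling j k) (m+1)]
        simp [Nat.choose]
      rw [h2, Finset.sum_range_succ, Nat.choose_succ_self, zero_mul, add_zero, ih]
    rw [hsecond]
    cases k with
    | zero =>
      have h1 : ∀ i ∈ range (m+1), Nat.choose m i * stirling (i+1) 0 = 0 := by
        intro i _
        rw [stirling_succ_zero, mul_zero]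
      rw [Finset.sum_congr rfl h1, Finset.sum_const_zero, zero_add]
      show stirling (m+1) 1 = 1 * stirling (m + 1) 1 + stirling (m+1) 0
      rw [one_mul, stirling_succ_zero, add_zero]
    | succ k' =>
      have h1 : ∀ i ∈ range (m+1), Nat.choose m i * stirling (i+1) (k'+1)
          = (k'+1) * (Nat.choose m i * stirling i (k'+1)) + Nat.choose m i * stirling i k' := by
        intro i _
        show Nat.choose m i * ((k' + 1) * stirling i (k' + 1) + stirling i k') = _
        ring
      rw [Finset.sum_congr rfl h1, Finset.sum_add_distrib, ← Finset.mul_sum, ih, ih]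
      show (k' + 1) * stirling (m+1) (k'+2) + stirling (m+1) (k'+1) + stirling (m+1) (k'+1+1)
          = (k'+1+1) * stirling (m+1) (k'+1+1) + stirling (m+1) (k'+1)
      have : k' + 1 + 1 = k' + 2 := rfl
      rw [this]
      ring

lemma constantCoeff_exp_sub_one :
    constantCoeff (PowerSeries.exp KK - 1) = 0 := by
  rw [map_sub, map_one]
  have := coeff_exp' 0
  rw [PowerSeries.coeff_zero_eq_constantCoeff_apply] at this
  rw [this]
  simp

lemma D_exp_sub_one : D (PowerSeries.exp KK - 1) = PowerSeries.exp KK := by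
  have h := derivativeFun_add (PowerSeries.exp KK - 1) 1
  rw [sub_add_cancel, derivativeFun_one, add_zero] at h
  rw [← h, D_exp]

lemma stirling_egf (w : KK) : ∀ m : ℕ,
    ((m.factorial : ℕ) : KK) *
        coeff m (comp (PowerSeries.exp KK) (C w * (PowerSeries.exp KK - 1)))
      = ∑ k ∈ range (m + 1), (stirling m k : KK) * w ^ k := by
  set g : PowerSeries KK := C w * (PowerSeries.exp KK - 1) with hgdef
  have hg0 : constantCoeff g = 0 := by
    rw [hgdef, map_mul, constantCoeff_exp_sub_one, mul_zero]
  set B : PowerSeries KK := comp (PowerSeries.exp KK) g with hBdef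
  have hDg : D g = C w * PowerSeries.exp KK := by
    rw [hgdef, derivativeFun_mul, D_C, smul_zero, add_zero, smul_eq_mul,
      D_exp_sub_one]
  have hDB : D B = B * (C w * PowerSeries.exp KK) := by
    rw [hBdef, D_expc _ hg0, hDg]
  intro m
  induction m using Nat.strong_induction_on with
  | _ m ih =>
    cases m with
    | zero =>
      have h0 : coeff 0 B = 1 := by
        rw [PowerSeries.coeff_zero_eq_constantCoeff_apply, hBdef, constantCoeff_expc _ hg0]
      rw [h0]
      show ((1 : ℕ) : KK) * 1 = ∑ k ∈ range 1, (stirling 0 k : KK) * w ^ k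
      rw [Finset.sum_range_one]
      show ((1:ℕ):KK) * 1 = ((1:ℕ):KK) * w ^ 0
      rw [pow_zero]
    | succ m =>
      have hc : coeff (m+1) B * ((m : KK) + 1)
          = coeff m (B * (C w * PowerSeries.exp KK)) := by
        rw [← hDB, coeff_D]
      have hcm : coeff m (B * (C w * PowerSeries.exp KK))
          = ∑ i ∈ range (m+1),
              coeff i B * (w * algebraMap ℚ KK (((m - i).factorial : ℚ)⁻¹)) := by
        rw [PowerSeries.coeff_mul, Finset.Nat.sum_antidiagonal_eq_sum_range_succ_mk]
        apply Finset.sum_congr rfl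
        intro i _
        rw [coeff_C_mul, coeff_exp']
      -- multiply by m!
      have key : ((m+1).factorial : KK) * coeff (m+1) B
          = ∑ i ∈ range (m+1), ((m.factorial : ℕ) : KK) *
              (coeff i B * (w * algebraMap ℚ KK (((m - i).factorial : ℚ)⁻¹))) := by
        rw [← Finset.mul_sum, ← hcm, ← hc, Nat.factorial_succ]
        push_cast
        ring
      rw [key]
      have hterm : ∀ i ∈ range (m+1), ((m.factorial : ℕ) : KK) *
            (coeff i B * (w * algebraMap ℚ KK (((m - i).factorial : ℚ)⁻¹)))
          = (Nat.choose m i : KK) * w *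
              (∑ k ∈ range (m+1), (stirling i k : KK) * w ^ k) := by
        intro i hi
        have him : i ≤ m := by have := mem_range.1 hi; omega
        have hfact : ((m.factorial : ℕ) : KK) * algebraMap ℚ KK (((m - i).factorial : ℚ)⁻¹)
            = (Nat.choose m i : KK) * ((i.factorial : ℕ) : KK) := by
          have hm : ((m.factorial : ℕ) : KK) = algebraMap ℚ KK ((m.factorial : ℕ) : ℚ) := by
            rw [map_natCast]
          have hch : ((Nat.choose m i : ℕ) : KK) * ((i.factorial : ℕ) : KK)
              = algebraMap ℚ KK ((Nat.choose m i : ℚ) * (i.factorial : ℚ)) := by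
            rw [map_mul, map_natCast, map_natCast]
          rw [hm, hch, ← map_mul]
          congr 1
          have hne : (((m-i).factorial : ℚ)) ≠ 0 := Nat.cast_ne_zero.2 (Nat.factorial_ne_zero _)
          field_simp
          have := Nat.choose_mul_factorial_mul_factorial him
          push_cast [← this]
          ring
        have hB : ((i.factorial : ℕ) : KK) * coeff i B
            = ∑ k ∈ range (i + 1), (stirling i k : KK) * w ^ k := ih i (by omega)
        have hext : ∑ k ∈ range (i + 1), (stirling i k : KK) * w ^ k
            = ∑ k ∈ range (m + 1), (stirling i k : KK) * w ^ k := by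
          apply Finset.sum_subset
          · intro x hx; simp only [mem_range] at hx ⊢; omega
          · intro k _ hk
            simp only [mem_range, not_lt] at hk
            rw [stirling_eq_zero_of_lt i k (by omega), Nat.cast_zero, zero_mul]
        rw [← hext, ← hB]
        calc ((m.factorial : ℕ) : KK) *
              (coeff i B * (w * algebraMap ℚ KK (((m - i).factorial : ℚ)⁻¹)))
            = (((m.factorial : ℕ) : KK) * algebraMap ℚ KK (((m - i).factorial : ℚ)⁻¹)) *
                coeff i B * w := by ring
          _ = ((Nat.choose m i : KK) * ((i.factorial : ℕ) : KK)) * coeff i B * w := by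
              rw [hfact]
          _ = (Nat.choose m i : KK) * w * (((i.factorial : ℕ) : KK) * coeff i B) := by ring
      rw [Finset.sum_congr rfl hterm]
      -- swap sums and apply stirling_binom
      have hswap : ∑ i ∈ range (m+1), (Nat.choose m i : KK) * w *
            (∑ k ∈ range (m+1), (stirling i k : KK) * w ^ k)
          = ∑ k ∈ range (m+1), (stirling (m+1) (k+1) : KK) * w ^ (k+1) := by
        have h1 : ∀ i ∈ range (m+1), (Nat.choose m i : KK) * w *
              (∑ k ∈ range (m+1), (stirling i k : KK) * w ^ k)
            = ∑ k ∈ range (m+1), (Nat.choose m i : KK) * (stirling i k : KK) * w ^ (k+1) := by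
          intro i _
          rw [Finset.mul_sum]
          apply Finset.sum_congr rfl
          intro k _
          ring
        rw [Finset.sum_congr rfl h1, Finset.sum_comm]
        apply Finset.sum_congr rfl
        intro k _
        rw [← Finset.sum_mul]
        congr 1
        have : ∑ i ∈ range (m+1), (Nat.choose m i : KK) * (stirling i k : KK)
            = ((∑ i ∈ range (m+1), Nat.choose m i * stirling i k : ℕ) : KK) := by
          push_cast
          rfl
        rw [this, stirling_binom m k]
      rw [hswap, Finset.sum_range_succ' (fun k => (stirling (m+1) k : KK) * w ^ k) (m+1)]
      show ∑ k ∈ range (m+1), (stirling (m+1) (k+1) : KK) * w ^ (k+1)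
          = (∑ k ∈ range (m+1), (stirling (m+1) (k+1) : KK) * w ^ (k+1))
            + (stirling (m+1) 0 : KK) * w ^ 0
      rw [stirling_succ_zero, Nat.cast_zero, zero_mul, add_zero]

lemma expc_zero : comp (PowerSeries.exp KK) 0 = 1 := by
  apply PowerSeries.ext
  intro n
  rw [coeff_comp]
  rw [Finset.sum_eq_single 0]
  · rw [pow_zero, coeff_exp']
    simp
  · intro k _ hk
    obtain ⟨k', rfl⟩ : ∃ k', k = k' + 1 := ⟨k - 1, by omega⟩
    rw [zero_pow (by omega : k' + 1 ≠ 0), map_zero, mul_zero]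
  · simp

lemma expc_pow (g : PowerSeries KK) (hg : constantCoeff g = 0) (n : ℕ) :
    comp (PowerSeries.exp KK) g ^ n
      = comp (PowerSeries.exp KK) (C ((n : ℕ) : KK) * g) := by
  induction n with
  | zero =>
    rw [pow_zero, Nat.cast_zero, map_zero, zero_mul, expc_zero]
  | succ n ih =>
    have hcg : constantCoeff (C ((n : ℕ) : KK) * g) = 0 := by
      rw [map_mul, hg, mul_zero]
    rw [pow_succ, ih, ← expc_add _ _ hcg hg]
    congr 1
    have hc : ((n + 1 : ℕ) : KK) = ((n : ℕ) : KK) + 1 := by push_cast; ring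
    rw [hc, map_add, map_one, add_mul, one_mul]

end Laginv

open Laginv

/-- If `R̄ = t·exp(u·(e^{R̄} - 1))` (coefficients in `ℚ[u]`, `u = Polynomial.X`), then
`[tⁿ/n!] R̄ = ∑_{k=1}^{n-1} (n·u)ᵏ S(n-1, k)`. -/
theorem coeff_edge_counting_hypertree_series (R : PowerSeries (Polynomial ℚ))
    (hR0 : PowerSeries.constantCoeff (R := Polynomial ℚ) R = 0)
    (hR : R = PowerSeries.X *
      expComp (PowerSeries.C (R := Polynomial ℚ) Polynomial.X * (expComp R - 1)))
    (n : ℕ) (hn : 2 ≤ n) :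
    (n.factorial : Polynomial ℚ) * PowerSeries.coeff (R := Polynomial ℚ) n R =
      ∑ k ∈ Finset.Icc 1 (n - 1),
        (stirling (n - 1) k : Polynomial ℚ) *
          ((n : Polynomial ℚ) * Polynomial.X) ^ k := by
  set u : KK := Polynomial.X with hu
  set φ : PowerSeries KK :=
    comp (PowerSeries.exp KK) (C u * (PowerSeries.exp KK - 1)) with hφdef
  have hg0 : constantCoeff (C u * (PowerSeries.exp KK - 1)) = 0 := by
    rw [map_mul, constantCoeff_exp_sub_one, mul_zero]
  have hφ0 : constantCoeff φ = 1 := constantCoeff_expc _ hg0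
  have hcomp : comp φ R = expComp (C u * (expComp R - 1)) := by
    rw [expComp_eq (C u * (expComp R - 1)), expComp_eq R, hφdef,
      comp_assoc _ _ _ hg0 hR0, comp_mul _ _ _ hR0, comp_C, comp_sub, comp_one]
  have hfe : R = X * comp φ R := by
    rw [hcomp, ← hR]
  have hlag := lagrange φ R hφ0 hR0 hfe n 1 le_rfl (by omega)
  rw [pow_one, Nat.cast_one, one_mul] at hlag
  have hφn : φ ^ n = comp (PowerSeries.exp KK)
      (C (((n : ℕ) : KK) * u) * (PowerSeries.exp KK - 1)) := by
    rw [hφdef, expc_pow _ hg0 n, map_mul, mul_assoc]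
  have hegf := stirling_egf (((n : ℕ) : KK) * u) (n - 1)
  have hfact : (n.factorial : KK) = ((n - 1).factorial : KK) * ((n : ℕ) : KK) := by
    obtain ⟨n', rfl⟩ : ∃ n', n = n' + 1 := ⟨n - 1, by omega⟩
    rw [Nat.factorial_succ, Nat.add_sub_cancel]
    push_cast
    ring
  have main : (n.factorial : KK) * coeff n R
      = ∑ k ∈ range ((n - 1) + 1), (stirling (n - 1) k : KK) * (((n : ℕ) : KK) * u) ^ k := by
    calc (n.factorial : KK) * coeff n R
        = ((n-1).factorial : KK) * (((n : ℕ) : KK) * coeff n R) := by rw [hfact]; ring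
      _ = ((n-1).factorial : KK) * coeff (n-1) (φ ^ n) := by rw [hlag]
      _ = ((n-1).factorial : KK) * coeff (n-1) (comp (PowerSeries.exp KK)
            (C (((n : ℕ) : KK) * u) * (PowerSeries.exp KK - 1))) := by rw [hφn]
      _ = ∑ k ∈ range ((n - 1) + 1), (stirling (n - 1) k : KK) * (((n : ℕ) : KK) * u) ^ k :=
          hegf
  rw [main]
  symm
  apply Finset.sum_subset
  · intro k hk
    simp only [Finset.mem_Icc] at hk
    simp only [mem_range]
    omega
  · intro k hk hk'
    simp only [mem_range] at hk
    simp only [Finset.mem_Icc] at hk'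
    have hk0 : k = 0 := by omega
    subst hk0
    obtain ⟨n', hn'⟩ : ∃ n', n - 1 = n' + 1 := ⟨n - 2, by omega⟩
    rw [hn', stirling_succ_zero, Nat.cast_zero, zero_mul]
end
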